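/- arXiv:2405.21023 — 2 statements merged into one kernel-verified Lean document; each statement's English description precedes it below -/
import Mathlib

section
/- With f(δ) = Σ_{k=1}^B clamp(p̂_k + δ, l_k, u_k) as above, if Σ_k l_k < D < Σ_k u_k, then the output vector p̃ with p̃_k = clamp(p̂_k + δ, l_k, u_k) for any δ satisfying f(δ) = D is unique: if f(δ₁) = f(δ₂) = D for δ₁ ≤ δ₂, then clamp(p̂_k + δ₁, l_k, u_k) = clamp(p̂_k + δ₂, l_k, u_k) for every k. -/
/-- Uniqueness of the hypersimplex-projection output: if `Σ l_k < D < Σ u_k` and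
two shifts `δ₁ ≤ δ₂` both achieve `f(δᵢ) = D`, then the clamped vectors agree
componentwise. -/
theorem hypersimplex_output_unique {B : ℕ}
    (phat l u : Fin B → ℝ) (hlu : ∀ k, l k ≤ u k)
    (D : ℝ) (hD1 : (∑ k, l k) < D) (hD2 : D < ∑ k, u k)
    (δ₁ δ₂ : ℝ) (h12 : δ₁ ≤ δ₂)
    (h1 : (∑ k, min (max (phat k + δ₁) (l k)) (u k)) = D)
    (h2 : (∑ k, min (max (phat k + δ₂) (l k)) (u k)) = D) :
    ∀ k, min (max (phat k + δ₁) (l k)) (u k)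
        = min (max (phat k + δ₂) (l k)) (u k) := by
  have hmono : ∀ k : Fin B, min (max (phat k + δ₁) (l k)) (u k)
      ≤ min (max (phat k + δ₂) (l k)) (u k) := fun k =>
    min_le_min (max_le_max (by linarith) le_rfl) le_rfl
  have hsum : (∑ k, min (max (phat k + δ₁) (l k)) (u k))
      = ∑ k, min (max (phat k + δ₂) (l k)) (u k) := by rw [h1, h2]
  intro k
  exact ((Finset.sum_eq_sum_iff_of_le (fun i _ => hmono i)).mp hsum k
    (Finset.mem_univ k))
end

section
/- MILP encoding of the knapsack feasibility-repair layer: let w ∈ ℝ₊^K, l ≥ 0, and let P be a K×K permutation matrix sorting items so that w̃ = P w are the weights in the greedy order. Suppose ỹ ∈ {0,1}^K satisfies (i) ỹ_k ≥ ỹ_{k+1} for all k < K, (ii) w̃ᵀ ỹ ≤ l, and (iii) for each k, Σ_{i=1}^{k} w̃_i ≥ (1 − ỹ_k)(l + 1) when each w̃_i ≥ 1 is integral and l is integral. Then ỹ is exactly the greedy selection: ỹ_k = 1 iff Σ_{i=1}^{k} w̃_i ≤ l. -/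
/-- Exactness of the MILP encoding of the knapsack feasibility-repair layer:
with integral weights `w̃ᵢ ≥ 1` (in sorted greedy order) and integral capacity
`l ≥ 0`, any 0/1 vector `ỹ` satisfying the monotonicity, capacity, and prefix
constraints is exactly the greedy selection: `ỹ_k = 1` iff the prefix sum up
to `k` is at most `l`. -/
theorem knapsack_repair_milp_exact {K : ℕ}
    (w : Fin K → ℤ) (hw : ∀ i, 1 ≤ w i)
    (l : ℤ) (hl : 0 ≤ l)
    (y : Fin K → ℤ)
    (hy01 : ∀ k, y k = 0 ∨ y k = 1)
    (hmono : ∀ k : Fin K, ∀ h : (k : ℕ) + 1 < K, y ⟨(k : ℕ) + 1, h⟩ ≤ y k)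
    (hcap : (∑ k, w k * y k) ≤ l)
    (hpref : ∀ k : Fin K,
      (1 - y k) * (l + 1) ≤ ∑ i ∈ Finset.univ.filter (fun i => i ≤ k), w i) :
    ∀ k : Fin K,
      y k = 1 ↔ (∑ i ∈ Finset.univ.filter (fun i => i ≤ k), w i) ≤ l := by
  have key : ∀ n (h : n < K) (i : Fin K), (i : ℕ) ≤ n → y ⟨n, h⟩ ≤ y i := by
    intro n
    induction n with
    | zero =>
      intro h i hi
      have : i = ⟨0, h⟩ := Fin.ext (Nat.le_zero.mp hi)
      rw [this]
    | succ n ih =>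
      intro h i hi
      rcases Nat.lt_or_ge (i : ℕ) (n + 1) with hlt | hge
      · have hn : n < K := Nat.lt_of_succ_lt h
        have step := hmono ⟨n, hn⟩ h
        exact le_trans step (ih hn i (Nat.lt_succ_iff.mp hlt))
      · have : i = ⟨n + 1, h⟩ := Fin.ext (le_antisymm hi hge)
        rw [this]
  intro k
  constructor
  · intro hk
    have h1 : ∀ i ∈ Finset.univ.filter (fun i => i ≤ k), y i = 1 := by
      intro i hi
      simp only [Finset.mem_filter] at hi
      have hki : y k ≤ y i := by
        have := key (k : ℕ) k.isLt i hi.2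
        simpa using this
      rcases hy01 i with h0 | h1
      · rw [h0] at hki; omega
      · exact h1
    calc (∑ i ∈ Finset.univ.filter (fun i => i ≤ k), w i)
        = ∑ i ∈ Finset.univ.filter (fun i => i ≤ k), w i * y i :=
          Finset.sum_congr rfl (fun i hi => by rw [h1 i hi, mul_one])
      _ ≤ ∑ i, w i * y i := by
          apply Finset.sum_le_sum_of_subset_of_nonneg (Finset.filter_subset _ _)
          intro i _ _
          have := hw i
          rcases hy01 i with h0 | h0 <;> rw [h0] <;> linarith
      _ ≤ l := hcap
  · intro hle
    rcases hy01 k with h0 | h1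
    · exfalso
      have := hpref k
      rw [h0] at this
      linarith
    · exact h1
end
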